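/- For every f ∈ A_LP, the function g(x) := f̂(x/r(f)) belongs to A₁, satisfies g(0) = 1 and ρ₁(g) = Z(f), where Z(f) := r(f) + (2/r(f)) ∫₀^{r(f)} f(x) x dx; consequently C₁ ≤ Z(f) for every f ∈ A_LP. -/

import Mathlib

open MeasureTheory Filter
open scoped Classical

noncomputable section

/-- The Fourier transform `ĝ(α) = ∫ g(x) e^{-2πiαx} dx` of a real-valued function. -/
def fourierT (g : ℝ → ℝ) (α : ℝ) : ℂ :=
  ∫ x : ℝ, (g x : ℂ) * Complex.exp (-(2 * Real.pi * α * x : ℝ) * Complex.I)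

/-- The class `A₁` of continuous, even, non-negative functions `g ∈ L¹(ℝ)`
with `ĝ(α) ≤ 0` for `|α| ≥ 1` (such `ĝ` is real-valued since `g` is even and real). -/
def memA1 (g : ℝ → ℝ) : Prop :=
  Continuous g ∧ (∀ x, g (-x) = g x) ∧ (∀ x, 0 ≤ g x) ∧ MeasureTheory.Integrable g ∧
    ∀ α : ℝ, 1 ≤ |α| → (fourierT g α).re ≤ 0

/-- The functional `ρ₁(g) = ĝ(0) + ∫_{-1}^{1} ĝ(α)|α| dα`. -/
def rho1 (g : ℝ → ℝ) : ℝ :=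
  (fourierT g 0).re + ∫ α in (-1 : ℝ)..1, (fourierT g α).re * |α|

/-- The constant `C₁ = inf ρ₁(g)/g(0)` over nonzero `g ∈ A₁` with `g(0) > 0`. -/
def C1 : ℝ :=
  sInf {c : ℝ | ∃ g : ℝ → ℝ, memA1 g ∧ g ≠ 0 ∧ 0 < g 0 ∧ c = rho1 g / g 0}

/-- The Cohn–Elkies linear programming class `A_LP`: even continuous `f ∈ L¹(ℝ)` with
`f(0) = f̂(0) = 1`, `f̂ ≥ 0`, and `f` eventually non-positive. -/
def memALP (f : ℝ → ℝ) : Prop :=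
  Continuous f ∧ (∀ x, f (-x) = f x) ∧ MeasureTheory.Integrable f ∧
    f 0 = 1 ∧ fourierT f 0 = 1 ∧ (∀ α : ℝ, 0 ≤ (fourierT f α).re) ∧
    ∃ r : ℝ, ∀ x : ℝ, r ≤ |x| → f x ≤ 0

/-- The last sign change `r(f) = inf{r > 0 : f(x) ≤ 0 for all |x| ≥ r}`. -/
def lastSign (f : ℝ → ℝ) : ℝ :=
  sInf {r : ℝ | 0 < r ∧ ∀ x : ℝ, r ≤ |x| → f x ≤ 0}

/-- The functional `Z(f) = r(f) + (2/r(f)) ∫₀^{r(f)} f(x) x dx`. -/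
def Zfun (f : ℝ → ℝ) : ℝ :=
  lastSign f + (2 / lastSign f) * ∫ x in (0 : ℝ)..(lastSign f), f x * x

open Complex Real
open scoped FourierTransform Topology RealInnerProductSpace

/-! ### Auxiliary lemmas -/

lemma bridge (g : ℝ → ℝ) (α : ℝ) :
    fourierT g α = 𝓕 (fun x => (g x : ℂ)) α := by
  unfold fourierT
  rw [Real.fourier_real_eq_integral_exp_smul]
  congr 1
  ext x
  rw [smul_eq_mul, mul_comm]
  congr 2
  push_cast
  ring

lemma expI_norm (θ : ℝ) : ‖Complex.exp ((θ : ℂ) * Complex.I)‖ = 1 := by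
  simp [Complex.norm_exp_ofReal_mul_I]

lemma integrand_int' (f : ℝ → ℝ) (hf : Integrable f) (ξ : ℝ) :
    Integrable (fun v : ℝ =>
      Complex.exp (((-2 * π * v * ξ : ℝ) : ℂ) * Complex.I) • ((f v : ℝ) : ℂ)) := by
  have : Integrable (fun v : ℝ =>
      Complex.exp (((-2 * π * v * ξ : ℝ) : ℂ) * Complex.I) * ((f v : ℝ) : ℂ)) := by
    refine Integrable.bdd_mul (c := 1) hf.ofReal ?_ (Eventually.of_forall fun v => le_of_eq (expI_norm _))
    exact (Complex.continuous_exp.comp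
      ((Complex.continuous_ofReal.comp (by continuity)).mul continuous_const)).aestronglyMeasurable
  exact this.congr (Eventually.of_forall fun v => by simp [smul_eq_mul])

lemma fourier_cont (f : ℝ → ℂ) (hf : Integrable f) : Continuous (𝓕 f) :=
  VectorFourier.fourierIntegral_continuous Real.continuous_fourierChar continuous_inner hf

lemma fourier_bdd (f : ℝ → ℂ) : ∀ ξ : ℝ, ‖𝓕 f ξ‖ ≤ ∫ x, ‖f x‖ := fun ξ =>
  VectorFourier.norm_fourierIntegral_le_integral_norm _ _ _ _ _

lemma fourier_even (f : ℝ → ℝ) (hev : ∀ x, f (-x) = f x) (ξ : ℝ) :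
    𝓕 (fun x => (f x : ℂ)) (-ξ) = 𝓕 (fun x => (f x : ℂ)) ξ := by
  rw [Real.fourier_real_eq_integral_exp_smul,
    Real.fourier_real_eq_integral_exp_smul]
  rw [← MeasureTheory.integral_neg_eq_self
    (fun v : ℝ => Complex.exp (((-2 * π * v * ξ : ℝ) : ℂ) * Complex.I) • ((f v : ℝ) : ℂ))]
  congr 1
  ext v
  rw [hev]
  congr 3
  push_cast
  ring

lemma fourier_real (f : ℝ → ℝ) (hf : Integrable f) (hev : ∀ x, f (-x) = f x) (ξ : ℝ) :
    (𝓕 (fun x => (f x : ℂ)) ξ).im = 0 := by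
  rw [Real.fourier_real_eq_integral_exp_smul]
  have h1 : (∫ v : ℝ, Complex.exp (((-2 * π * v * ξ : ℝ) : ℂ) * Complex.I) • ((f v : ℝ) : ℂ)).im
      = ∫ v : ℝ, (Complex.exp (((-2 * π * v * ξ : ℝ) : ℂ) * Complex.I) • ((f v : ℝ) : ℂ)).im :=
    (integral_im (integrand_int' f hf ξ)).symm
  rw [h1]
  have h2 : ∀ v : ℝ, (Complex.exp (((-2 * π * v * ξ : ℝ) : ℂ) * Complex.I) • ((f v : ℝ) : ℂ)).im
      = Real.sin (-2 * π * v * ξ) * f v := by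
    intro v
    rw [smul_eq_mul, Complex.mul_im, Complex.ofReal_im, Complex.ofReal_re,
      Complex.exp_ofReal_mul_I_im]
    ring
  simp_rw [h2]
  have h3 := MeasureTheory.integral_neg_eq_self (μ := volume) (fun v : ℝ => Real.sin (-2 * π * v * ξ) * f v)
  have h4 : (∫ v : ℝ, Real.sin (-2 * π * (-v) * ξ) * f (-v))
      = ∫ v : ℝ, -(Real.sin (-2 * π * v * ξ) * f v) := by
    congr 1
    ext v
    rw [hev, show -2 * π * (-v) * ξ = -(-2 * π * v * ξ) by ring, Real.sin_neg]
    ring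
  rw [h4, integral_neg] at h3
  linarith

lemma tendsto_key (f : ℝ → ℂ) (hf : Integrable f) (hcont : ContinuousAt f 0) :
    Tendsto (fun c : ℝ => ∫ x : ℝ, Complex.exp (-(c : ℂ)⁻¹ * ‖x‖ ^ 2) • 𝓕 f x)
      atTop (𝓝 (f 0)) := by
  have T0 := Real.tendsto_integral_gaussian_smul' (v := 0) hf hcont
  apply T0.congr'
  filter_upwards [Ioi_mem_atTop (0 : ℝ)] with c (hc : 0 < c)
  have hb : 0 < ((c : ℂ)⁻¹).re := by simpa using inv_pos.2 hc
  have J : Integrable (fun v : ℝ => Complex.exp (-(c : ℂ)⁻¹ * ‖v‖ ^ 2)) := by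
    simpa using GaussianFourier.integrable_cexp_neg_mul_sq_norm_add (V := ℝ) hb 0 0
  have flip := (VectorFourier.integral_fourierIntegral_smul_eq_flip (L := innerₗ ℝ)
      Real.continuous_fourierChar continuous_inner J hf)
  have hG : ∀ w : ℝ, 𝓕 (fun v : ℝ => Complex.exp (-(c : ℂ)⁻¹ * ‖v‖ ^ 2)) w
      = ((π * c : ℂ) ^ ((Module.finrank ℝ ℝ : ℂ) / 2)
        * Complex.exp (-π ^ 2 * c * ‖(0:ℝ) - w‖ ^ 2)) := by
    intro w
    rw [fourier_gaussian_innerProductSpace hb w]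
    have hc0 : (c : ℂ) ≠ 0 := by exact_mod_cast hc.ne'
    congr 1
    · field_simp
    · congr 1
      field_simp
      rw [zero_sub, norm_neg]
  calc ∫ w : ℝ, ((π * c : ℂ) ^ ((Module.finrank ℝ ℝ : ℂ) / 2)
        * Complex.exp (-π ^ 2 * c * ‖(0:ℝ) - w‖ ^ 2)) • f w
      = ∫ w : ℝ, (𝓕 (fun v : ℝ => Complex.exp (-(c : ℂ)⁻¹ * ‖v‖ ^ 2)) w) • f w := by
        simp_rw [hG]
    _ = ∫ x : ℝ, Complex.exp (-(c : ℂ)⁻¹ * ‖x‖ ^ 2) • 𝓕 f x := by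
        rw [show (innerₗ ℝ).flip = innerₗ ℝ from LinearMap.ext₂ fun x y => real_inner_comm x y] at flip
        exact flip
lemma fourier_integrable_of_nonneg (f : ℝ → ℂ) (hf : Integrable f) (hcont : ContinuousAt f 0)
    (him : ∀ ξ, (𝓕 f ξ).im = 0) (hpos : ∀ ξ, 0 ≤ (𝓕 f ξ).re) :
    Integrable (fun ξ => (𝓕 f ξ).re) := by
  set F : ℝ → ℝ := fun ξ => (𝓕 f ξ).re with hF
  have hFcont : Continuous F :=
    Complex.continuous_re.comp (fourier_cont f hf)
  have hFbdd : ∀ ξ, ‖F ξ‖ ≤ ∫ x, ‖f x‖ := fun ξ =>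
    le_trans (Complex.abs_re_le_norm _) (fourier_bdd f ξ)
  -- integrable complex integrand for fixed c > 0
  have hJc : ∀ c : ℝ, 0 < c → Integrable (fun ξ : ℝ =>
      Complex.exp (-(c : ℂ)⁻¹ * ‖ξ‖ ^ 2) • 𝓕 f ξ) := by
    intro c hc
    have hb : 0 < ((c : ℂ)⁻¹).re := by simpa using inv_pos.2 hc
    have J : Integrable (fun v : ℝ => Complex.exp (-(c : ℂ)⁻¹ * ‖v‖ ^ 2)) := by
      simpa using GaussianFourier.integrable_cexp_neg_mul_sq_norm_add (V := ℝ) hb 0 0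
    have : Integrable (fun ξ : ℝ => (𝓕 f ξ) * Complex.exp (-(c : ℂ)⁻¹ * ‖ξ‖ ^ 2)) := by
      refine Integrable.bdd_mul J ?_ (Eventually.of_forall (fourier_bdd f))
      exact (fourier_cont f hf).aestronglyMeasurable
    exact this.congr (Eventually.of_forall fun ξ => by show 𝓕 f ξ * _ = _ • 𝓕 f ξ; rw [smul_eq_mul, mul_comm])
  -- real-valued integrands
  have hIc : ∀ c : ℝ, 0 < c → Integrable (fun ξ : ℝ => Real.exp (-c⁻¹ * ‖ξ‖ ^ 2) * F ξ) := by
    intro c hc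
    have J : Integrable (fun v : ℝ => Real.exp (-c⁻¹ * ‖v‖ ^ 2)) := by
      have := integrable_exp_neg_mul_sq (inv_pos.2 hc)
      exact this.congr (Eventually.of_forall fun x => by
        simp [Real.norm_eq_abs, _root_.sq_abs, neg_mul])
    have : Integrable (fun ξ : ℝ => F ξ * Real.exp (-c⁻¹ * ‖ξ‖ ^ 2)) :=
      Integrable.bdd_mul J hFcont.aestronglyMeasurable (Eventually.of_forall hFbdd)
    exact this.congr (Eventually.of_forall fun ξ => mul_comm _ _)
  -- re of complex integrand
  have hre : ∀ c : ℝ, ∀ ξ : ℝ, (Complex.exp (-(c : ℂ)⁻¹ * ‖ξ‖ ^ 2) • 𝓕 f ξ).re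
      = Real.exp (-c⁻¹ * ‖ξ‖ ^ 2) * F ξ := by
    intro c ξ
    rw [smul_eq_mul, show (-(c : ℂ)⁻¹ * (‖ξ‖ : ℂ) ^ 2) = ((-c⁻¹ * ‖ξ‖ ^ 2 : ℝ) : ℂ) by
      push_cast; ring, ← Complex.ofReal_exp, Complex.re_ofReal_mul]
  -- real tendsto
  have Treal : Tendsto (fun c : ℝ => ∫ ξ : ℝ, Real.exp (-c⁻¹ * ‖ξ‖ ^ 2) * F ξ)
      atTop (𝓝 ((f 0).re)) := by
    have T := (tendsto_key f hf hcont)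
    have T2 : Tendsto (fun c : ℝ => (∫ ξ : ℝ, Complex.exp (-(c : ℂ)⁻¹ * ‖ξ‖ ^ 2) • 𝓕 f ξ).re)
        atTop (𝓝 ((f 0).re)) := (Complex.continuous_re.tendsto _).comp T
    apply T2.congr'
    filter_upwards [Ioi_mem_atTop (0 : ℝ)] with c (hc : 0 < c)
    calc (∫ ξ : ℝ, Complex.exp (-(c : ℂ)⁻¹ * ‖ξ‖ ^ 2) • 𝓕 f ξ).re
        = ∫ ξ : ℝ, (Complex.exp (-(c : ℂ)⁻¹ * ‖ξ‖ ^ 2) • 𝓕 f ξ).re :=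
          (integral_re (hJc c hc)).symm
      _ = ∫ ξ : ℝ, Real.exp (-c⁻¹ * ‖ξ‖ ^ 2) * F ξ := by simp_rw [hre]
  -- monotonicity in c
  have hmono : ∀ c c' : ℝ, 0 < c → c ≤ c' →
      (∫ ξ : ℝ, Real.exp (-c⁻¹ * ‖ξ‖ ^ 2) * F ξ) ≤ ∫ ξ : ℝ, Real.exp (-c'⁻¹ * ‖ξ‖ ^ 2) * F ξ := by
    intro c c' hc hcc
    refine integral_mono (hIc c hc) (hIc c' (lt_of_lt_of_le hc hcc)) fun ξ => ?_
    have : -c⁻¹ * ‖ξ‖ ^ 2 ≤ -c'⁻¹ * ‖ξ‖ ^ 2 := by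
      have : c'⁻¹ ≤ c⁻¹ := inv_anti₀ hc hcc
      nlinarith [sq_nonneg ‖ξ‖]
    exact mul_le_mul_of_nonneg_right (Real.exp_le_exp.2 this) (hpos ξ)
  -- each integral bounded by limit
  have hle : ∀ c : ℝ, 0 < c → (∫ ξ : ℝ, Real.exp (-c⁻¹ * ‖ξ‖ ^ 2) * F ξ) ≤ (f 0).re := by
    intro c hc
    refine ge_of_tendsto Treal ?_
    filter_upwards [Ici_mem_atTop c] with c' (hc' : c ≤ c')
    exact hmono c c' hc hc'
  -- lintegral bound
  have hlint : (∫⁻ ξ : ℝ, ENNReal.ofReal (F ξ)) ≤ ENNReal.ofReal ((f 0).re) := by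
    have key : (∫⁻ ξ : ℝ, ENNReal.ofReal (F ξ))
        = ⨆ n : ℕ, ∫⁻ ξ : ℝ, ENNReal.ofReal (Real.exp (-((n : ℝ) + 1)⁻¹ * ‖ξ‖ ^ 2) * F ξ) := by
      rw [← lintegral_iSup]
      · congr 1
        ext ξ
        have hmon : Monotone fun n : ℕ =>
            ENNReal.ofReal (Real.exp (-((n : ℝ) + 1)⁻¹ * ‖ξ‖ ^ 2) * F ξ) := by
          intro n m hnm
          refine ENNReal.ofReal_le_ofReal (mul_le_mul_of_nonneg_right
            (Real.exp_le_exp.2 ?_) (hpos ξ))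
          have h1 : ((m : ℝ) + 1)⁻¹ ≤ ((n : ℝ) + 1)⁻¹ := by
            apply inv_anti₀ (by positivity)
            have : (n : ℝ) ≤ (m : ℝ) := Nat.cast_le.2 hnm
            linarith
          nlinarith [sq_nonneg ‖ξ‖]
        have hT : Tendsto (fun n : ℕ =>
            ENNReal.ofReal (Real.exp (-((n : ℝ) + 1)⁻¹ * ‖ξ‖ ^ 2) * F ξ)) atTop
            (𝓝 (ENNReal.ofReal (F ξ))) := by
          apply (ENNReal.continuous_ofReal.tendsto _).comp
          have h1 : Tendsto (fun n : ℕ => -((n : ℝ) + 1)⁻¹ * ‖ξ‖ ^ 2) atTop (𝓝 0) := by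
            have := tendsto_one_div_add_atTop_nhds_zero_nat (𝕜 := ℝ)
            simp only [one_div] at this
            have := (this.neg.mul_const (‖ξ‖ ^ 2))
            simpa using this
          have := ((Real.continuous_exp.tendsto _).comp h1).mul_const (F ξ)
          simpa using this
        exact (tendsto_nhds_unique (tendsto_atTop_iSup hmon) hT).symm
      · intro n
        apply ENNReal.measurable_ofReal.comp
        exact (Continuous.mul (by continuity) hFcont).measurable
      · intro n m hnm ξ
        refine ENNReal.ofReal_le_ofReal (mul_le_mul_of_nonneg_right
          (Real.exp_le_exp.2 ?_) (hpos ξ))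
        have h1 : ((m : ℝ) + 1)⁻¹ ≤ ((n : ℝ) + 1)⁻¹ := by
          apply inv_anti₀ (by positivity)
          have : (n : ℝ) ≤ (m : ℝ) := Nat.cast_le.2 hnm
          linarith
        nlinarith [sq_nonneg ‖ξ‖]
    rw [key]
    refine iSup_le fun n => ?_
    have hn : (0 : ℝ) < (n : ℝ) + 1 := by positivity
    rw [← ofReal_integral_eq_lintegral_ofReal (hIc _ hn)
      (Eventually.of_forall fun ξ => mul_nonneg (Real.exp_pos _).le (hpos ξ))]
    exact ENNReal.ofReal_le_ofReal (hle _ hn)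
  refine ⟨hFcont.aestronglyMeasurable, ?_⟩
  rw [hasFiniteIntegral_iff_ofReal (Eventually.of_forall hpos)]
  exact lt_of_le_of_lt hlint ENNReal.ofReal_lt_top

lemma key_pack (f : ℝ → ℝ) (hco : Continuous f) (hInt : Integrable f)
    (hev : ∀ x, f (-x) = f x) (hpos : ∀ α, 0 ≤ (𝓕 (fun x => (f x : ℂ)) α).re) :
    Integrable (fun ξ => (𝓕 (fun x => (f x : ℂ)) ξ).re) ∧
    (∀ w, 𝓕 (𝓕 (fun x => (f x : ℂ))) w = ((f w : ℝ) : ℂ)) := by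
  set fc : ℝ → ℂ := fun x => (f x : ℂ) with hfc_def
  have hfc : Integrable fc := hInt.ofReal
  have hfcc : Continuous fc := Complex.continuous_ofReal.comp hco
  have him := fourier_real f hInt hev
  have hFint : Integrable (fun ξ => (𝓕 fc ξ).re) :=
    fourier_integrable_of_nonneg fc hfc hfcc.continuousAt him hpos
  have hFcint : Integrable (𝓕 fc) := by
    have heq : 𝓕 fc = fun ξ => (((𝓕 fc ξ).re : ℝ) : ℂ) :=
      funext fun ξ => Complex.ext (by simp) (by simp [him ξ]; exact him ξ)
    rw [heq]
    exact hFint.ofReal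
  have hinv : 𝓕⁻ (𝓕 fc) = fc := hfcc.fourierInv_fourier_eq hfc hFcint
  refine ⟨hFint, fun w => ?_⟩
  have h1 : 𝓕⁻ (𝓕 fc) (-w) = 𝓕 (𝓕 fc) w := by
    rw [Real.fourierInv_eq_fourier_neg, neg_neg]
  rw [← h1, hinv]
  show ((f (-w) : ℝ) : ℂ) = _
  rw [hev w]

lemma abs_int_one : ∫ α in (-1:ℝ)..1, |α| = 1 := by
  have hii1 : IntervalIntegrable (fun α : ℝ => |α|) volume (-1) 0 :=
    _root_.continuous_abs.intervalIntegrable _ _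
  have hii2 : IntervalIntegrable (fun α : ℝ => |α|) volume 0 1 :=
    _root_.continuous_abs.intervalIntegrable _ _
  have hsplit := intervalIntegral.integral_add_adjacent_intervals hii1 hii2
  have h1 : ∫ α in (0:ℝ)..1, |α| = 1/2 := by
    rw [intervalIntegral.integral_congr (g := fun α : ℝ => α) ?_]
    · rw [integral_id]; norm_num
    · intro α hα
      rw [Set.uIcc_of_le (by norm_num : (0:ℝ) ≤ 1)] at hα
      exact abs_of_nonneg hα.1
  have h3 := intervalIntegral.integral_comp_neg (a := (0:ℝ)) (b := 1) (fun α => |α|)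
  simp only [abs_neg, neg_zero] at h3
  rw [← hsplit, ← h3, h1]
  norm_num

/-- For every `f ∈ A_LP`, the function `g(x) := f̂(x/r(f))` belongs to `A₁`, satisfies
`g(0) = 1` and `ρ₁(g) = Z(f)`; consequently `C₁ ≤ Z(f)` for every `f ∈ A_LP`. -/
theorem statement13 (f : ℝ → ℝ) (hf : memALP f) :
    memA1 (fun x => (fourierT f (x / lastSign f)).re) ∧
    (fun x => (fourierT f (x / lastSign f)).re) 0 = 1 ∧
    rho1 (fun x => (fourierT f (x / lastSign f)).re) = Zfun f ∧
    C1 ≤ Zfun f := by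
  obtain ⟨hco, hev, hInt, hf0, hft0, hposT, r₁, hr₁⟩ := hf
  set fc : ℝ → ℂ := fun x => (f x : ℂ) with hfc_def
  have hbridge : ∀ α, fourierT f α = 𝓕 fc α := fun α => bridge f α
  have hpos : ∀ α, 0 ≤ (𝓕 fc α).re := fun α => by rw [← hbridge]; exact hposT α
  obtain ⟨hFint, hdouble⟩ := key_pack f hco hInt hev hpos
  have him := fourier_real f hInt hev
  have hevF : ∀ ξ, 𝓕 fc (-ξ) = 𝓕 fc ξ := fourier_even f hev
  -- properties of `lastSign f`
  set S := {s : ℝ | 0 < s ∧ ∀ x : ℝ, s ≤ |x| → f x ≤ 0} with hS_def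
  have hSne : S.Nonempty :=
    ⟨max r₁ 1, lt_of_lt_of_le one_pos (le_max_right _ _),
      fun x hx => hr₁ x (le_trans (le_max_left _ _) hx)⟩
  have hball : ∃ ε > 0, ∀ y : ℝ, |y| < ε → 0 < f y := by
    have h1 : Tendsto f (𝓝 0) (𝓝 1) := by
      have := hco.continuousAt (x := 0)
      rwa [ContinuousAt, hf0] at this
    have h2 : ∀ᶠ y in 𝓝 (0:ℝ), 0 < f y := h1.eventually (eventually_gt_nhds one_pos)
    obtain ⟨ε, hε, hb⟩ := Metric.eventually_nhds_iff.1 h2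
    exact ⟨ε, hε, fun y hy => hb (by simpa [Real.dist_eq] using hy)⟩
  obtain ⟨ε, hε, hb⟩ := hball
  have hrS : lastSign f = sInf S := rfl
  have hrpos : 0 < lastSign f := by
    rw [hrS]
    refine lt_of_lt_of_le hε (le_csInf hSne fun s hs => ?_)
    by_contra h
    push_neg at h
    have h2 := hs.2 s (le_of_eq (abs_of_pos hs.1).symm)
    exact absurd h2 (not_le.2 (hb s (by rwa [abs_of_pos hs.1])))
  set r := lastSign f with hr_def
  have hrne : r ≠ 0 := hrpos.ne'
  have hlt : ∀ x : ℝ, r < |x| → f x ≤ 0 := by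
    intro x hx
    obtain ⟨s, hsS, hs⟩ := exists_lt_of_csInf_lt hSne (hrS ▸ hx)
    exact hsS.2 x hs.le
  have hprop : ∀ x : ℝ, r ≤ |x| → f x ≤ 0 := by
    intro x hx
    have hxpos : 0 < |x| := lt_of_lt_of_le hrpos hx
    have hseq : Tendsto (fun n : ℕ => f ((1 + ((n:ℝ)+1)⁻¹) * x)) atTop (𝓝 (f x)) := by
      have h1 : Tendsto (fun n : ℕ => (1 + ((n:ℝ)+1)⁻¹) * x) atTop (𝓝 x) := by
        have h0 := tendsto_one_div_add_atTop_nhds_zero_nat (𝕜 := ℝ)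
        simp only [one_div] at h0
        have h2 := (h0.const_add 1).mul_const x
        simpa using h2
      exact (hco.tendsto x).comp h1
    refine le_of_tendsto hseq (Eventually.of_forall fun n => ?_)
    apply hlt
    have hn : (0:ℝ) < ((n:ℝ)+1)⁻¹ := by positivity
    calc r ≤ |x| := hx
      _ < (1 + ((n:ℝ)+1)⁻¹) * |x| := by nlinarith
      _ = |(1 + ((n:ℝ)+1)⁻¹) * x| := by
          rw [abs_mul, abs_of_pos (by linarith : (0:ℝ) < 1 + ((n:ℝ)+1)⁻¹)]
  -- the function g
  set g : ℝ → ℝ := fun x => (fourierT f (x / lastSign f)).re with hg_def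
  have hgF : ∀ x, g x = (𝓕 fc (x / r)).re := fun x => by
    rw [hg_def]
    simp only []
    rw [hbridge]
  have hgFfun : g = fun x => (𝓕 fc (x / r)).re := funext hgF
  -- Fourier transform of g
  have hgT : ∀ α, fourierT g α = ((r * f (r * α) : ℝ) : ℂ) := by
    intro α
    rw [bridge]
    have hcoe : (fun x : ℝ => ((g x : ℝ) : ℂ)) = fun x => 𝓕 fc (x / r) := by
      funext x
      rw [hgF x]
      exact Complex.ext (by simp) (by simp [him (x/r)]; exact (him (x/r)).symm)
    rw [hcoe, Real.fourier_real_eq_integral_exp_smul]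
    have hpt : (fun v : ℝ => Complex.exp (((-2 * π * v * α : ℝ) : ℂ) * Complex.I) • 𝓕 fc (v / r))
        = fun v : ℝ => (fun u : ℝ =>
            Complex.exp (((-2 * π * u * (r * α) : ℝ) : ℂ) * Complex.I) • 𝓕 fc u) (v / r) := by
      funext v
      have hrc : (r : ℂ) ≠ 0 := by exact_mod_cast hrne
      simp only []
      congr 3
      push_cast
      field_simp
    rw [hpt, MeasureTheory.Measure.integral_comp_div
      (fun u : ℝ => Complex.exp (((-2 * π * u * (r * α) : ℝ) : ℂ) * Complex.I) • 𝓕 fc u) r,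
      ← Real.fourier_real_eq_integral_exp_smul, hdouble (r * α), abs_of_pos hrpos]
    rw [Complex.real_smul]
    push_cast
    ring
  have hgRe : ∀ α, (fourierT g α).re = r * f (r * α) := fun α => by rw [hgT]; simp
  -- membership in A₁
  have hgc : Continuous g := by
    rw [hgFfun]
    exact Complex.continuous_re.comp ((fourier_cont fc hInt.ofReal).comp
      (continuous_id.div_const r))
  have hA1 : memA1 g := by
    refine ⟨hgc, fun x => ?_, fun x => by rw [hgF]; exact hpos _, ?_, fun α hα => ?_⟩
    · rw [hgF, hgF, neg_div, hevF]
    · rw [hgFfun]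
      exact hFint.comp_div hrne
    · rw [hgRe]
      have h1 : f (r * α) ≤ 0 := by
        apply hprop
        rw [abs_mul, abs_of_pos hrpos]
        exact le_mul_of_one_le_right hrpos.le hα
      nlinarith
  -- g 0 = 1
  have hg0 : g 0 = 1 := by
    rw [hg_def]
    simp only [zero_div, hft0, Complex.one_re]
  -- rho1 g = Zfun f
  have hρ : rho1 g = Zfun f := by
    have h0 : (fourierT g 0).re = r := by
      rw [hgRe, mul_zero, hf0, mul_one]
    have hint_eq : (∫ α in (-1:ℝ)..1, (fourierT g α).re * |α|)
        = ∫ α in (-1:ℝ)..1, r * f (r * α) * |α| :=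
      intervalIntegral.integral_congr fun α _ => by rw [hgRe]
    set φ : ℝ → ℝ := fun α => r * f (r * α) * |α| with hφ_def
    have hφc : Continuous φ :=
      ((continuous_const.mul (hco.comp (continuous_const.mul continuous_id))).mul
        _root_.continuous_abs)
    have hii1 : IntervalIntegrable φ volume (-1) 0 := hφc.intervalIntegrable _ _
    have hii2 : IntervalIntegrable φ volume 0 1 := hφc.intervalIntegrable _ _
    have hsplit := intervalIntegral.integral_add_adjacent_intervals hii1 hii2
    have hφeven : ∀ x, φ (-x) = φ x := fun x => by
      rw [hφ_def]
      simp only []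
      rw [show r * -x = -(r * x) by ring, hev, abs_neg]
    have h3 := intervalIntegral.integral_comp_neg (a := (0:ℝ)) (b := 1) φ
    simp only [neg_zero] at h3
    have h4 : (∫ α in (0:ℝ)..1, φ (-α)) = ∫ α in (0:ℝ)..1, φ α :=
      intervalIntegral.integral_congr fun α _ => hφeven α
    have hrefl : (∫ α in (-1:ℝ)..0, φ α) = ∫ α in (0:ℝ)..1, φ α := by
      rw [← h3, h4]
    have habs : (∫ α in (0:ℝ)..1, φ α) = ∫ α in (0:ℝ)..1, (fun u => f u * u) (r * α) := by
      refine intervalIntegral.integral_congr fun α hα => ?_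
      rw [Set.uIcc_of_le (by norm_num : (0:ℝ) ≤ 1)] at hα
      rw [hφ_def]
      simp only []
      rw [_root_.abs_of_nonneg hα.1]
      ring
    have hcomp : (∫ α in (0:ℝ)..1, (fun u => f u * u) (r * α))
        = r⁻¹ * ∫ x in (0:ℝ)..r, f x * x := by
      rw [intervalIntegral.integral_comp_mul_left (fun u => f u * u) hrne, mul_zero, mul_one,
        smul_eq_mul]
    have : rho1 g = r + 2 * (r⁻¹ * ∫ x in (0:ℝ)..r, f x * x) := by
      rw [rho1, h0, hint_eq, ← hsplit, hrefl, habs, hcomp]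
      ring
    rw [this, Zfun]
    rw [← hr_def]
    field_simp
  refine ⟨hA1, hg0, hρ, ?_⟩
  -- C1 ≤ Zfun f
  have hBdd : BddBelow {c : ℝ | ∃ g' : ℝ → ℝ, memA1 g' ∧ g' ≠ 0 ∧ 0 < g' 0 ∧ c = rho1 g' / g' 0} := by
    refine ⟨0, ?_⟩
    rintro c ⟨g', hA1', hne', hg0', rfl⟩
    obtain ⟨hc', hev', hnn', hint', _⟩ := hA1'
    set M := (fourierT g' 0).re with hM_def
    have hM0 : fourierT g' 0 = ((∫ x, g' x : ℝ) : ℂ) := by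
      have hpt : ∀ x : ℝ, (g' x : ℂ) * Complex.exp (-(2 * Real.pi * (0:ℝ) * x : ℝ) * Complex.I)
          = ((g' x : ℝ) : ℂ) := by
        intro x
        norm_num
      unfold fourierT
      rw [integral_congr_ae (Eventually.of_forall hpt)]
      exact integral_ofReal
    have hMre : M = ∫ x, g' x := by rw [hM_def, hM0, Complex.ofReal_re]
    have hRle : ∀ α, |(fourierT g' α).re| ≤ M := by
      intro α
      have h1 : |(fourierT g' α).re| ≤ ‖fourierT g' α‖ := Complex.abs_re_le_norm _
      have h2 : ‖fourierT g' α‖ ≤ ∫ x, ‖(g' x : ℂ)‖ := by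
        rw [bridge]
        exact fourier_bdd _ α
      have h3 : (∫ x, ‖(g' x : ℂ)‖) = ∫ x, g' x := by
        refine integral_congr_ae (Eventually.of_forall fun x => ?_)
        show ‖(g' x : ℂ)‖ = g' x
        rw [Complex.norm_real, Real.norm_eq_abs, _root_.abs_of_nonneg (hnn' x)]
      rw [hMre]
      exact h1.trans (h2.trans_eq h3)
    have hRc : Continuous fun α => (fourierT g' α).re := by
      have heq : (fun α => (fourierT g' α).re) = fun α => (𝓕 (fun x => (g' x : ℂ)) α).re :=
        funext fun α => by rw [bridge]
      rw [heq]
      exact Complex.continuous_re.comp (fourier_cont _ hint'.ofReal)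
    have hint1 : IntervalIntegrable (fun α => (fourierT g' α).re * |α|) volume (-1) 1 :=
      (hRc.mul _root_.continuous_abs).intervalIntegrable _ _
    have hint2 : IntervalIntegrable (fun α : ℝ => -M * |α|) volume (-1) 1 :=
      (continuous_const.mul _root_.continuous_abs).intervalIntegrable _ _
    have hmono := intervalIntegral.integral_mono_on (by norm_num : (-1:ℝ) ≤ 1) hint2 hint1
      (fun α _ => mul_le_mul_of_nonneg_right (abs_le.1 (hRle α)).1 (abs_nonneg α))
    have hconst : (∫ α in (-1:ℝ)..1, -M * |α|) = -M := by
      rw [intervalIntegral.integral_const_mul, abs_int_one, mul_one]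
    refine div_nonneg ?_ hg0'.le
    have : -M ≤ ∫ α in (-1:ℝ)..1, (fourierT g' α).re * |α| := by
      rw [← hconst]
      exact hmono
    rw [rho1, ← hM_def]
    linarith
  have hmem : Zfun f ∈ {c : ℝ | ∃ g' : ℝ → ℝ, memA1 g' ∧ g' ≠ 0 ∧ 0 < g' 0 ∧ c = rho1 g' / g' 0} := by
    refine ⟨g, hA1, ?_, by rw [hg0]; norm_num, by rw [hρ, hg0, div_one]⟩
    intro h
    have h2 := congrFun h 0
    rw [hg0] at h2
    simp at h2
  exact csInf_le hBdd hmem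

end
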